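/- Let Q be a symmetric n×n real matrix, d ∈ ℝⁿ, A ∈ ℝ^{m×n}, b ∈ ℝᵐ, and suppose the feasible region F = {x : Ax ≤ b} is bounded. Let x̂ ∈ F and suppose Q is NOT H_{I_{x̂}}-conditionally positive definite, i.e. there exists a nonzero h ∈ ℝⁿ with a_iᵀh = 0 for all i ∈ I_{x̂} and hᵀQh ≤ 0. Then there exists x̄ ∈ F such that Φ(x̄) ≤ Φ(x̂) and I_{x̂} is a proper subset of I_{x̄}. -/
import Mathlib


open Matrix

/-- The objective `Φ(x) = xᵀQx + 2dᵀx`. -/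
noncomputable def Phi {n : ℕ} (Q : Matrix (Fin n) (Fin n) ℝ) (d : Fin n → ℝ)
    (x : Fin n → ℝ) : ℝ :=
  x ⬝ᵥ (Q *ᵥ x) + 2 * (d ⬝ᵥ x)

/-- Lemma `l:no vertex no pd`. Suppose `F = {x : Ax ≤ b}` is
bounded and `x̂ ∈ F`. If `Q` is not positive definite on the null space of the
active constraints at `x̂` (there is a nonzero `h` with `a_iᵀh = 0` for all active
`i` and `hᵀQh ≤ 0`), then there is `x̄ ∈ F` with `Φ(x̄) ≤ Φ(x̂)` whose active set
strictly contains that of `x̂`. -/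
theorem exists_descent_enlarging_active_set {n m : ℕ}
    (Q : Matrix (Fin n) (Fin n) ℝ) (hQ : Q.IsSymm)
    (d : Fin n → ℝ) (A : Matrix (Fin m) (Fin n) ℝ) (b : Fin m → ℝ)
    (hbdd : Bornology.IsBounded {x : Fin n → ℝ | A *ᵥ x ≤ b})
    (xhat : Fin n → ℝ) (hxhat : A *ᵥ xhat ≤ b)
    (hnpd : ∃ h : Fin n → ℝ, h ≠ 0 ∧
      (∀ i : Fin m, (A *ᵥ xhat) i = b i → (A *ᵥ h) i = 0) ∧ h ⬝ᵥ (Q *ᵥ h) ≤ 0) :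
    ∃ xbar : Fin n → ℝ, A *ᵥ xbar ≤ b ∧ Phi Q d xbar ≤ Phi Q d xhat ∧
      {i : Fin m | (A *ᵥ xhat) i = b i} ⊂ {i : Fin m | (A *ᵥ xbar) i = b i} := by
  obtain ⟨h0, hne0, hact0, hquad0⟩ := hnpd
  -- Choose the sign of the direction so that the linear term is nonpositive.
  obtain ⟨g, hgne, hgact, hgquad, hgc⟩ :
      ∃ g : Fin n → ℝ, g ≠ 0 ∧ (∀ i, (A *ᵥ xhat) i = b i → (A *ᵥ g) i = 0) ∧
        g ⬝ᵥ (Q *ᵥ g) ≤ 0 ∧ xhat ⬝ᵥ (Q *ᵥ g) + d ⬝ᵥ g ≤ 0 := by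
    by_cases hc : xhat ⬝ᵥ (Q *ᵥ h0) + d ⬝ᵥ h0 ≤ 0
    · exact ⟨h0, hne0, hact0, hquad0, hc⟩
    · refine ⟨-h0, neg_ne_zero.mpr hne0, ?_, ?_, ?_⟩
      · intro i hi; rw [mulVec_neg, Pi.neg_apply, hact0 i hi, neg_zero]
      · simpa [mulVec_neg, dotProduct_neg, neg_dotProduct] using hquad0
      · rw [mulVec_neg, dotProduct_neg, dotProduct_neg]; linarith
  have hsym : ∀ u v : Fin n → ℝ, u ⬝ᵥ (Q *ᵥ v) = v ⬝ᵥ (Q *ᵥ u) := by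
    intro u v
    calc u ⬝ᵥ (Q *ᵥ v) = (u ᵥ* Q) ⬝ᵥ v := dotProduct_mulVec _ _ _
      _ = (Qᵀ *ᵥ u) ⬝ᵥ v := by rw [mulVec_transpose]
      _ = (Q *ᵥ u) ⬝ᵥ v := by rw [hQ.eq]
      _ = v ⬝ᵥ (Q *ᵥ u) := dotProduct_comm _ _
  have hgnorm : 0 < ‖g‖ := norm_pos_iff.mpr hgne
  -- There is a constraint that increases along g, otherwise F is unbounded.
  have hS : ∃ j, 0 < (A *ᵥ g) j := by
    by_contra hcon
    push_neg at hcon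
    obtain ⟨C, hC⟩ := isBounded_iff_forall_norm_le.mp hbdd
    set t : ℝ := (C + ‖xhat‖ + 1) / ‖g‖ with htdef
    have hCpos : 0 ≤ C := le_trans (norm_nonneg xhat) (hC xhat hxhat)
    have ht0 : 0 ≤ t := div_nonneg (by linarith [norm_nonneg xhat]) hgnorm.le
    have hfeas : A *ᵥ (xhat + t • g) ≤ b := by
      intro i
      rw [mulVec_add, mulVec_smul, Pi.add_apply, Pi.smul_apply, smul_eq_mul]
      have h1 : t * (A *ᵥ g) i ≤ 0 := mul_nonpos_of_nonneg_of_nonpos ht0 (hcon i)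
      linarith [hxhat i]
    have hmem := hC _ hfeas
    have h2 : ‖t • g‖ ≤ ‖xhat + t • g‖ + ‖xhat‖ := by
      have := norm_sub_le (xhat + t • g) xhat
      simpa using this
    have h3 : ‖t • g‖ = t * ‖g‖ := by
      rw [norm_smul, Real.norm_of_nonneg ht0]
    have h4 : t * ‖g‖ = C + ‖xhat‖ + 1 := by
      rw [htdef, div_mul_cancel₀ _ hgnorm.ne']
    rw [h3, h4] at h2
    linarith
  set S : Finset (Fin m) := Finset.univ.filter (fun j => 0 < (A *ᵥ g) j) with hSdef
  have hSne : S.Nonempty := ⟨hS.choose, by simp [hSdef, hS.choose_spec]⟩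
  set f : Fin m → ℝ := fun j => (b j - (A *ᵥ xhat) j) / (A *ᵥ g) j with hfdef
  set tstar : ℝ := S.inf' hSne f with htstardef
  obtain ⟨jstar, hjS, hjeq⟩ := S.exists_mem_eq_inf' hSne f
  have hjpos : 0 < (A *ᵥ g) jstar := (Finset.mem_filter.mp hjS).2
  have ht0 : 0 ≤ tstar := by
    rw [htstardef]
    apply Finset.le_inf'
    intro j hj
    have hjp : 0 < (A *ᵥ g) j := (Finset.mem_filter.mp hj).2
    exact div_nonneg (sub_nonneg.mpr (hxhat j)) hjp.le
  refine ⟨xhat + tstar • g, ?_, ?_, ?_⟩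
  · intro j
    rw [mulVec_add, mulVec_smul, Pi.add_apply, Pi.smul_apply, smul_eq_mul]
    rcases le_or_gt ((A *ᵥ g) j) 0 with hle | hpos
    · have h1 : tstar * (A *ᵥ g) j ≤ 0 := mul_nonpos_of_nonneg_of_nonpos ht0 hle
      linarith [hxhat j]
    · have hjS' : j ∈ S := Finset.mem_filter.mpr ⟨Finset.mem_univ j, hpos⟩
      have h1 : tstar ≤ f j := Finset.inf'_le f hjS'
      have h2 : tstar * (A *ᵥ g) j ≤ b j - (A *ᵥ xhat) j := by
        rw [hfdef] at h1
        calc tstar * (A *ᵥ g) j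
            ≤ ((b j - (A *ᵥ xhat) j) / (A *ᵥ g) j) * (A *ᵥ g) j := by
              exact mul_le_mul_of_nonneg_right h1 hpos.le
          _ = b j - (A *ᵥ xhat) j := div_mul_cancel₀ _ hpos.ne'
      linarith
  · have expand : Phi Q d (xhat + tstar • g) =
        Phi Q d xhat + 2 * tstar * (xhat ⬝ᵥ (Q *ᵥ g) + d ⬝ᵥ g)
          + tstar ^ 2 * (g ⬝ᵥ (Q *ᵥ g)) := by
      simp only [Phi, mulVec_add, mulVec_smul, dotProduct_add, add_dotProduct,
        dotProduct_smul, smul_dotProduct, smul_eq_mul]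
      rw [hsym g xhat]
      ring
    rw [expand]
    nlinarith [mul_nonpos_of_nonneg_of_nonpos ht0 hgc, sq_nonneg tstar,
      mul_nonpos_of_nonneg_of_nonpos (sq_nonneg tstar) hgquad]
  · rw [Set.ssubset_def]
    constructor
    · intro i hi
      simp only [Set.mem_setOf_eq] at hi ⊢
      rw [mulVec_add, mulVec_smul, Pi.add_apply, Pi.smul_apply, smul_eq_mul,
        hgact i hi, mul_zero, add_zero]
      exact hi
    · intro hsub
      have hjmem : jstar ∈ {i | (A *ᵥ (xhat + tstar • g)) i = b i} := by
        simp only [Set.mem_setOf_eq, mulVec_add, mulVec_smul, Pi.add_apply,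
          Pi.smul_apply, smul_eq_mul]
        have htval : tstar = (b jstar - (A *ᵥ xhat) jstar) / (A *ᵥ g) jstar := by
          rw [htstardef, hjeq]
        rw [htval, div_mul_cancel₀ _ hjpos.ne']
        ring
      have hact := hsub hjmem
      simp only [Set.mem_setOf_eq] at hact
      exact hjpos.ne' (hgact jstar hact)
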